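/- arXiv:1204.5684 — 3 statements merged into one kernel-verified Lean document; each statement's English description precedes it below -/
import Mathlib

section
/- Let n ≥ 2 be an integer and let α, λ be real numbers with λ > 0, 0 < α < n-1 and n-1 < α+λ < 2(n-1). For w ∈ ℝⁿ set β(w) = 4|w|²/(1+|w|²)² and define Θ(w) = (2^{α+λ-n} π^{(n-1)/2} / Γ((n-1)/2)) · (|w|²/(1+|w|²))^{α+λ-n+1} · ∫₀¹ u^{(α+λ-n+1)/2 - 1} (1-u)^{(n-3)/2} (1-β(w)u)^{-α/2} du. Then for every w ∈ ℝⁿ, Θ(w) ≤ 2^{α+λ-n} π^{(n-1)/2} · Γ((α+λ-n+1)/2) Γ((n-1-α)/2) / (Γ((n-1)/2) Γ(λ/2)) · (|w|²/(1+|w|²))^{α+λ-n+1}; in particular Θ is uniformly bounded on ℝⁿ. -/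
open MeasureTheory Real intervalIntegral

lemma beta_integrable {a b : ℝ} (ha : 0 < a) (hb : 0 < b) :
    IntervalIntegrable (fun u : ℝ => u ^ (a - 1) * (1 - u) ^ (b - 1)) volume 0 1 := by
  have hc := Complex.betaIntegral_convergent (u := (a : ℂ)) (v := (b : ℂ)) (by simpa) (by simpa)
  rw [intervalIntegrable_iff, Set.uIoc_of_le (by norm_num : (0:ℝ) ≤ 1)] at hc ⊢
  refine hc.re.congr ?_
  filter_upwards [ae_restrict_mem measurableSet_Ioc] with x hx
  simp only [Set.mem_Ioc] at hx
  rw [show ((a:ℂ) - 1) = ((a - 1 : ℝ) : ℂ) by push_cast; ring,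
    show ((b:ℂ) - 1) = ((b - 1 : ℝ) : ℂ) by push_cast; ring,
    show ((1:ℂ) - (x:ℝ)) = ((1 - x : ℝ) : ℂ) by push_cast; ring,
    ← Complex.ofReal_cpow hx.1.le, ← Complex.ofReal_cpow (by linarith : (0:ℝ) ≤ 1 - x),
    ← Complex.ofReal_mul]
  simp

lemma beta_value {a b : ℝ} (ha : 0 < a) (hb : 0 < b) :
    ∫ u in (0:ℝ)..1, u ^ (a - 1) * (1 - u) ^ (b - 1)
      = Real.Gamma a * Real.Gamma b / Real.Gamma (a + b) := by
  have key := Complex.Gamma_mul_Gamma_eq_betaIntegral (s := (a : ℂ)) (t := (b : ℂ))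
    (by simpa) (by simpa)
  have hbeta : Complex.betaIntegral (a : ℂ) (b : ℂ)
      = ((∫ u in (0:ℝ)..1, u ^ (a - 1) * (1 - u) ^ (b - 1) : ℝ) : ℂ) := by
    rw [Complex.betaIntegral, ← intervalIntegral.integral_ofReal]
    refine intervalIntegral.integral_congr fun x hx => ?_
    rw [Set.uIcc_of_le (by norm_num : (0:ℝ) ≤ 1)] at hx
    rw [show ((a:ℂ) - 1) = ((a - 1 : ℝ) : ℂ) by push_cast; ring,
      show ((b:ℂ) - 1) = ((b - 1 : ℝ) : ℂ) by push_cast; ring,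
      show ((1:ℂ) - (x:ℝ)) = ((1 - x : ℝ) : ℂ) by push_cast; ring,
      ← Complex.ofReal_cpow hx.1, ← Complex.ofReal_cpow (by linarith [hx.2] : (0:ℝ) ≤ 1 - x),
      ← Complex.ofReal_mul]
  rw [hbeta, ← Complex.ofReal_add, Complex.Gamma_ofReal, Complex.Gamma_ofReal,
    Complex.Gamma_ofReal, ← Complex.ofReal_mul, ← Complex.ofReal_mul] at key
  have := Complex.ofReal_injective key
  have hpos : Real.Gamma (a + b) ≠ 0 := (Real.Gamma_pos_of_pos (by linarith)).ne'
  field_simp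
  linarith [this]

lemma integral_le_beta {a b c d bet : ℝ} (ha : 0 < a) (hb : 0 < b) (hd : 0 ≤ d)
    (hβ0 : 0 ≤ bet) (hβ1 : bet ≤ 1) (hbc : b - 1 = c - d) :
    ∫ u in (0:ℝ)..1, u ^ (a - 1) * (1 - u) ^ c * (1 - bet * u) ^ (-d)
      ≤ Real.Gamma a * Real.Gamma b / Real.Gamma (a + b) := by
  set f : ℝ → ℝ := fun u => u ^ (a - 1) * (1 - u) ^ c * (1 - bet * u) ^ (-d) with hf_def
  set g : ℝ → ℝ := fun u => u ^ (a - 1) * (1 - u) ^ (b - 1) with hg_def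
  have hg := beta_integrable ha hb
  have hle : ∀ u ∈ Set.Ioo (0:ℝ) 1, f u ≤ g u := by
    rintro u ⟨hu0, hu1⟩
    have h1u : (0:ℝ) < 1 - u := by linarith
    have hβu : bet * u ≤ u := by nlinarith
    have h3 : (1 - bet * u) ^ (-d) ≤ (1 - u) ^ (-d) :=
      Real.rpow_le_rpow_of_nonpos h1u (by linarith) (by linarith)
    calc u ^ (a - 1) * (1 - u) ^ c * (1 - bet * u) ^ (-d)
        ≤ u ^ (a - 1) * (1 - u) ^ c * (1 - u) ^ (-d) := by
          apply mul_le_mul_of_nonneg_left h3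
            (mul_nonneg (Real.rpow_nonneg hu0.le _) (Real.rpow_nonneg h1u.le _))
      _ = u ^ (a - 1) * (1 - u) ^ (b - 1) := by
          rw [mul_assoc, ← Real.rpow_add h1u, show c + -d = b - 1 by linarith]
  have hf0 : ∀ u ∈ Set.Ioc (0:ℝ) 1, 0 ≤ f u := by
    rintro u ⟨hu0, hu1⟩
    have : (0:ℝ) ≤ 1 - bet * u := by nlinarith
    exact mul_nonneg (mul_nonneg (Real.rpow_nonneg hu0.le _)
      (Real.rpow_nonneg (by linarith) _)) (Real.rpow_nonneg this _)
  have hf_meas : Measurable f := by fun_prop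
  have hf_int : IntervalIntegrable f volume 0 1 := by
    rw [intervalIntegrable_iff, Set.uIoc_of_le (by norm_num : (0:ℝ) ≤ 1)]
    rw [show (Set.Ioc (0:ℝ) 1) = (Set.Ioc 0 1) from rfl]
    rw [integrableOn_Ioc_iff_integrableOn_Ioo]
    have hg' : IntegrableOn g (Set.Ioo 0 1) volume := by
      have := (intervalIntegrable_iff.mp hg)
      rw [Set.uIoc_of_le (by norm_num : (0:ℝ) ≤ 1)] at this
      exact this.mono_set Set.Ioo_subset_Ioc_self
    refine hg'.mono' (hf_meas.aestronglyMeasurable.restrict) ?_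
    filter_upwards [ae_restrict_mem measurableSet_Ioo] with u hu
    rw [Real.norm_eq_abs, abs_of_nonneg (hf0 u (Set.Ioo_subset_Ioc_self hu))]
    exact hle u hu
  have hmono := intervalIntegral.integral_mono_ae_restrict (by norm_num : (0:ℝ) ≤ 1)
    hf_int hg ?_
  · rw [beta_value ha hb] at hmono
    exact hmono
  · rw [← Measure.restrict_congr_set MeasureTheory.Ioo_ae_eq_Icc]
    rw [Filter.EventuallyLE, ae_restrict_iff' measurableSet_Ioo]
    exact Filter.Eventually.of_forall hle

/-- Theorem 2 of the paper (delta-free form): the explicit evaluation `Θ(w)` of the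
bilinear hyperbolic-surface convolution is pointwise bounded by an explicit constant
times `(|w|²/(1+|w|²))^(α+λ-n+1)`; in particular it is uniformly bounded on `ℝⁿ`. -/
theorem multilinear_embedding_stmt0 (n : ℕ) (hn : 2 ≤ n) (α lam : ℝ) (hlam : 0 < lam)
    (hα0 : 0 < α) (hα1 : α < (n : ℝ) - 1)
    (hsum1 : (n : ℝ) - 1 < α + lam) (hsum2 : α + lam < 2 * ((n : ℝ) - 1)) :
    (∀ w : EuclideanSpace ℝ (Fin n),
      ((2 : ℝ) ^ (α + lam - (n : ℝ)) * Real.pi ^ (((n : ℝ) - 1) / 2) /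
          Real.Gamma (((n : ℝ) - 1) / 2)) *
          (‖w‖ ^ 2 / (1 + ‖w‖ ^ 2)) ^ (α + lam - (n : ℝ) + 1) *
          ∫ u in (0:ℝ)..1,
            u ^ ((α + lam - (n : ℝ) + 1) / 2 - 1) * (1 - u) ^ (((n : ℝ) - 3) / 2) *
              (1 - (4 * ‖w‖ ^ 2 / (1 + ‖w‖ ^ 2) ^ 2) * u) ^ (-(α / 2))
        ≤ (2 : ℝ) ^ (α + lam - (n : ℝ)) * Real.pi ^ (((n : ℝ) - 1) / 2) *
            (Real.Gamma ((α + lam - (n : ℝ) + 1) / 2) * Real.Gamma (((n : ℝ) - 1 - α) / 2) /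
              (Real.Gamma (((n : ℝ) - 1) / 2) * Real.Gamma (lam / 2))) *
            (‖w‖ ^ 2 / (1 + ‖w‖ ^ 2)) ^ (α + lam - (n : ℝ) + 1)) ∧
    (∃ C : ℝ, ∀ w : EuclideanSpace ℝ (Fin n),
      ((2 : ℝ) ^ (α + lam - (n : ℝ)) * Real.pi ^ (((n : ℝ) - 1) / 2) /
          Real.Gamma (((n : ℝ) - 1) / 2)) *
          (‖w‖ ^ 2 / (1 + ‖w‖ ^ 2)) ^ (α + lam - (n : ℝ) + 1) *
          ∫ u in (0:ℝ)..1,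
            u ^ ((α + lam - (n : ℝ) + 1) / 2 - 1) * (1 - u) ^ (((n : ℝ) - 3) / 2) *
              (1 - (4 * ‖w‖ ^ 2 / (1 + ‖w‖ ^ 2) ^ 2) * u) ^ (-(α / 2))
        ≤ C) := by
  have hn2 : (2:ℝ) ≤ (n:ℝ) := by exact_mod_cast hn
  have ha : 0 < (α + lam - (n : ℝ) + 1) / 2 := by linarith
  have hb : 0 < ((n : ℝ) - 1 - α) / 2 := by linarith
  have hΓc : 0 < Real.Gamma (((n : ℝ) - 1) / 2) := Real.Gamma_pos_of_pos (by linarith)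
  have hΓl : 0 < Real.Gamma (lam / 2) := Real.Gamma_pos_of_pos (by linarith)
  have hΓa : 0 < Real.Gamma ((α + lam - (n : ℝ) + 1) / 2) := Real.Gamma_pos_of_pos ha
  have hΓb : 0 < Real.Gamma (((n : ℝ) - 1 - α) / 2) := Real.Gamma_pos_of_pos hb
  have key : ∀ w : EuclideanSpace ℝ (Fin n),
      ((2 : ℝ) ^ (α + lam - (n : ℝ)) * Real.pi ^ (((n : ℝ) - 1) / 2) /
          Real.Gamma (((n : ℝ) - 1) / 2)) *
          (‖w‖ ^ 2 / (1 + ‖w‖ ^ 2)) ^ (α + lam - (n : ℝ) + 1) *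
          ∫ u in (0:ℝ)..1,
            u ^ ((α + lam - (n : ℝ) + 1) / 2 - 1) * (1 - u) ^ (((n : ℝ) - 3) / 2) *
              (1 - (4 * ‖w‖ ^ 2 / (1 + ‖w‖ ^ 2) ^ 2) * u) ^ (-(α / 2))
        ≤ (2 : ℝ) ^ (α + lam - (n : ℝ)) * Real.pi ^ (((n : ℝ) - 1) / 2) *
            (Real.Gamma ((α + lam - (n : ℝ) + 1) / 2) * Real.Gamma (((n : ℝ) - 1 - α) / 2) /
              (Real.Gamma (((n : ℝ) - 1) / 2) * Real.Gamma (lam / 2))) *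
            (‖w‖ ^ 2 / (1 + ‖w‖ ^ 2)) ^ (α + lam - (n : ℝ) + 1) := by
    intro w
    set t : ℝ := ‖w‖ ^ 2 with ht_def
    have ht : 0 ≤ t := sq_nonneg _
    have hden : (0:ℝ) < 1 + t := by linarith
    have hβ0 : 0 ≤ 4 * t / (1 + t) ^ 2 := by positivity
    have hβ1 : 4 * t / (1 + t) ^ 2 ≤ 1 := by
      rw [div_le_one (by positivity)]; nlinarith [sq_nonneg (1 - t)]
    have hI := integral_le_beta ha hb (by linarith : (0:ℝ) ≤ α / 2) hβ0 hβ1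
      (by ring : ((n : ℝ) - 1 - α) / 2 - 1 = ((n : ℝ) - 3) / 2 - α / 2)
    rw [show (α + lam - (n : ℝ) + 1) / 2 + ((n : ℝ) - 1 - α) / 2 = lam / 2 by ring] at hI
    have hP : 0 ≤ ((2 : ℝ) ^ (α + lam - (n : ℝ)) * Real.pi ^ (((n : ℝ) - 1) / 2) /
        Real.Gamma (((n : ℝ) - 1) / 2)) *
        (‖w‖ ^ 2 / (1 + ‖w‖ ^ 2)) ^ (α + lam - (n : ℝ) + 1) := by positivity
    have h2 := mul_le_mul_of_nonneg_left hI hP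
    calc ((2 : ℝ) ^ (α + lam - (n : ℝ)) * Real.pi ^ (((n : ℝ) - 1) / 2) /
          Real.Gamma (((n : ℝ) - 1) / 2)) *
          (‖w‖ ^ 2 / (1 + ‖w‖ ^ 2)) ^ (α + lam - (n : ℝ) + 1) *
          ∫ u in (0:ℝ)..1,
            u ^ ((α + lam - (n : ℝ) + 1) / 2 - 1) * (1 - u) ^ (((n : ℝ) - 3) / 2) *
              (1 - (4 * ‖w‖ ^ 2 / (1 + ‖w‖ ^ 2) ^ 2) * u) ^ (-(α / 2))
        ≤ ((2 : ℝ) ^ (α + lam - (n : ℝ)) * Real.pi ^ (((n : ℝ) - 1) / 2) /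
          Real.Gamma (((n : ℝ) - 1) / 2)) *
          (‖w‖ ^ 2 / (1 + ‖w‖ ^ 2)) ^ (α + lam - (n : ℝ) + 1) *
          (Real.Gamma ((α + lam - (n : ℝ) + 1) / 2) * Real.Gamma (((n : ℝ) - 1 - α) / 2) /
            Real.Gamma (lam / 2)) := h2
      _ = (2 : ℝ) ^ (α + lam - (n : ℝ)) * Real.pi ^ (((n : ℝ) - 1) / 2) *
            (Real.Gamma ((α + lam - (n : ℝ) + 1) / 2) * Real.Gamma (((n : ℝ) - 1 - α) / 2) /
              (Real.Gamma (((n : ℝ) - 1) / 2) * Real.Gamma (lam / 2))) *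
            (‖w‖ ^ 2 / (1 + ‖w‖ ^ 2)) ^ (α + lam - (n : ℝ) + 1) := by
          field_simp
  refine ⟨key, ⟨(2 : ℝ) ^ (α + lam - (n : ℝ)) * Real.pi ^ (((n : ℝ) - 1) / 2) *
      (Real.Gamma ((α + lam - (n : ℝ) + 1) / 2) * Real.Gamma (((n : ℝ) - 1 - α) / 2) /
        (Real.Gamma (((n : ℝ) - 1) / 2) * Real.Gamma (lam / 2))), fun w => ?_⟩⟩
  refine (key w).trans ?_
  have hK : 0 ≤ (2 : ℝ) ^ (α + lam - (n : ℝ)) * Real.pi ^ (((n : ℝ) - 1) / 2) *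
      (Real.Gamma ((α + lam - (n : ℝ) + 1) / 2) * Real.Gamma (((n : ℝ) - 1 - α) / 2) /
        (Real.Gamma (((n : ℝ) - 1) / 2) * Real.Gamma (lam / 2))) := by positivity
  have hX1 : (‖w‖ ^ 2 / (1 + ‖w‖ ^ 2)) ^ (α + lam - (n : ℝ) + 1) ≤ 1 := by
    have h0 : (0:ℝ) ≤ ‖w‖ ^ 2 / (1 + ‖w‖ ^ 2) := by positivity
    have h1 : ‖w‖ ^ 2 / (1 + ‖w‖ ^ 2) ≤ 1 := by
      rw [div_le_one (by positivity)]; linarith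
    exact Real.rpow_le_one h0 h1 (by linarith)
  calc _ ≤ _ * 1 := mul_le_mul_of_nonneg_left hX1 hK
    _ = _ := mul_one _
end

section
/- Let n ≥ 2 be an integer, a ≥ 1 a real number, and α, λ real numbers with 0 ≤ α < n-1 and α + λ > n-1. Then ∫ₐ^∞ (r²-1)^{-α/2} · r^{n-λ-2} · (1 - a²/r²)^{(n-3)/2} dr = (1/2) · a^{n-1-λ-α} · ∫₀¹ u^{(α+λ-n+1)/2 - 1} (1-u)^{(n-3)/2} (1 - u/a²)^{-α/2} du, both integrals being finite. -/
open MeasureTheory Real Set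
set_option maxHeartbeats 1600000

lemma beta_II {p q : ℝ} (hp : -1 < p) (hq : -1 < q) :
    IntervalIntegrable (fun x : ℝ => x ^ p * (1 - x) ^ q) volume 0 1 := by
  have half : ∀ p q : ℝ, -1 < p →
      IntervalIntegrable (fun x : ℝ => x ^ p * (1 - x) ^ q) volume 0 (1/2) := by
    intro p q hp
    apply IntervalIntegrable.mul_continuousOn (intervalIntegral.intervalIntegrable_rpow' hp)
    apply ContinuousOn.rpow_const ((continuous_const.sub continuous_id).continuousOn)
    intro x hx
    rw [uIcc_of_le (by norm_num)] at hx
    left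
    have := hx.2
    norm_num at this ⊢
    linarith
  refine (half p q hp).trans ?_
  have h2 := ((half q p hq).comp_sub_left 1).symm
  have he : (fun x : ℝ => (1 - x) ^ q * (1 - (1 - x)) ^ p) = fun x : ℝ => x ^ p * (1 - x) ^ q := by
    funext x; rw [sub_sub_cancel, mul_comm]
  rw [he] at h2
  norm_num at h2
  exact h2

/-- The key radial change-of-variables identity (substituting `u = a²/r²`) from the
proof of Theorem 2 of the paper: both integrals are finite and
`∫ₐ^∞ (r²-1)^{-α/2} r^{n-λ-2} (1-a²/r²)^{(n-3)/2} dr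
  = (1/2) a^{n-1-λ-α} ∫₀¹ u^{(α+λ-n+1)/2-1} (1-u)^{(n-3)/2} (1-u/a²)^{-α/2} du`. -/
theorem multilinear_embedding_stmt1 (n : ℕ) (hn : 2 ≤ n) (a α lam : ℝ) (ha : 1 ≤ a)
    (hα0 : 0 ≤ α) (hα1 : α < (n : ℝ) - 1) (hsum : (n : ℝ) - 1 < α + lam) :
    IntegrableOn
      (fun r : ℝ => (r ^ 2 - 1) ^ (-(α / 2)) * r ^ ((n : ℝ) - lam - 2) *
        (1 - a ^ 2 / r ^ 2) ^ (((n : ℝ) - 3) / 2)) (Set.Ioi a) ∧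
    IntervalIntegrable
      (fun u : ℝ => u ^ ((α + lam - (n : ℝ) + 1) / 2 - 1) * (1 - u) ^ (((n : ℝ) - 3) / 2) *
        (1 - u / a ^ 2) ^ (-(α / 2))) volume 0 1 ∧
    ∫ r in Set.Ioi a, (r ^ 2 - 1) ^ (-(α / 2)) * r ^ ((n : ℝ) - lam - 2) *
        (1 - a ^ 2 / r ^ 2) ^ (((n : ℝ) - 3) / 2)
      = (1 / 2) * a ^ ((n : ℝ) - 1 - lam - α) *
        ∫ u in (0:ℝ)..1, u ^ ((α + lam - (n : ℝ) + 1) / 2 - 1) *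
          (1 - u) ^ (((n : ℝ) - 3) / 2) * (1 - u / a ^ 2) ^ (-(α / 2)) := by
  have ha0 : (0:ℝ) < a := lt_of_lt_of_le one_pos ha
  have hn2 : (2:ℝ) ≤ (n:ℝ) := by exact_mod_cast hn
  set p : ℝ := (α + lam - (n : ℝ) + 1) / 2 - 1 with hpdef
  set q : ℝ := ((n : ℝ) - 3) / 2 with hqdef
  set g : ℝ → ℝ := fun r : ℝ => (r ^ 2 - 1) ^ (-(α / 2)) * r ^ ((n : ℝ) - lam - 2) *
    (1 - a ^ 2 / r ^ 2) ^ q with hgdef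
  set h : ℝ → ℝ := fun u : ℝ => u ^ p * (1 - u) ^ q * (1 - u / a ^ 2) ^ (-(α / 2)) with hhdef
  have hp : -1 < p := by rw [hpdef]; linarith
  have hqα : -1 < q - α/2 := by rw [hqdef]; linarith
  -- integrability of h on Ioo 0 1
  have hmeas : Measurable h := by
    rw [hhdef]; fun_prop
  have hbound : IntegrableOn (fun u : ℝ => u ^ p * (1-u) ^ (q - α/2)) (Ioo (0:ℝ) 1) := by
    have := beta_II hp hqα
    rw [intervalIntegrable_iff_integrableOn_Ioc_of_le zero_le_one] at this
    exact this.mono_set Ioo_subset_Ioc_self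
  have hInt : IntegrableOn h (Ioo (0:ℝ) 1) := by
    apply Integrable.mono hbound (hmeas.aestronglyMeasurable.restrict)
    filter_upwards [ae_restrict_mem measurableSet_Ioo] with u hu
    have hu0 : (0:ℝ) < u := hu.1
    have hu1 : u < 1 := hu.2
    have h1u : (0:ℝ) < 1 - u := by linarith
    have ha2 : (1:ℝ) ≤ a^2 := by nlinarith
    have hua : u / a^2 ≤ u := div_le_self hu0.le ha2
    have h1ua : (0:ℝ) < 1 - u / a^2 := by linarith
    rw [hhdef, Real.norm_eq_abs, Real.norm_eq_abs, abs_of_nonneg (by positivity),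
      abs_of_nonneg (by positivity)]
    have hle : (1 - u/a^2) ^ (-(α/2)) ≤ (1-u) ^ (-(α/2)) :=
      Real.rpow_le_rpow_of_nonpos h1u (by linarith) (by linarith)
    calc u^p * (1-u)^q * (1-u/a^2)^(-(α/2)) ≤ u^p * (1-u)^q * (1-u)^(-(α/2)) := by
          apply mul_le_mul_of_nonneg_left hle (by positivity)
      _ = u^p * (1-u)^(q - α/2) := by
          rw [mul_assoc, ← Real.rpow_add h1u]
          congr 1
  have hII : IntervalIntegrable h volume 0 1 := by
    rw [intervalIntegrable_iff_integrableOn_Ioc_of_le zero_le_one,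
      integrableOn_Ioc_iff_integrableOn_Ioo]
    exact hInt
  -- the change of variables
  set f : ℝ → ℝ := fun u : ℝ => a * u ^ (-(1/2) : ℝ) with hfdef
  set f' : ℝ → ℝ := fun u : ℝ => a * (-(1/2) * u ^ (-(1/2) - 1 : ℝ)) with hf'def
  have hderiv : ∀ u ∈ Ioo (0:ℝ) 1, HasDerivWithinAt f (f' u) (Ioo (0:ℝ) 1) u := fun u hu =>
    ((Real.hasDerivAt_rpow_const (p := -(1/2)) (Or.inl hu.1.ne')).const_mul a).hasDerivWithinAt
  have hinj : InjOn f (Ioo (0:ℝ) 1) := by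
    have hanti : StrictAntiOn f (Ioo (0:ℝ) 1) := by
      intro u hu v hv huv
      exact mul_lt_mul_of_pos_left (Real.rpow_lt_rpow_of_neg hu.1 huv (by norm_num)) ha0
    exact hanti.injOn
  have himg : f '' Ioo (0:ℝ) 1 = Ioi a := by
    ext r
    constructor
    · rintro ⟨u, hu, rfl⟩
      have h1 : 1 < u ^ (-(1/2) : ℝ) :=
        (Real.one_lt_rpow_iff_of_pos hu.1).2 (Or.inr ⟨hu.2, by norm_num⟩)
      have : a < a * u ^ (-(1/2) : ℝ) := by nlinarith
      simpa [hfdef] using this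
    · intro hr
      have hra : a < r := hr
      have hr0 : (0:ℝ) < r := lt_trans ha0 hra
      refine ⟨a^2 / r^2, ⟨by positivity, ?_⟩, ?_⟩
      · rw [div_lt_one (by positivity)]; nlinarith
      · have hdiv : (a^2 / r^2 : ℝ) = (a/r)^2 := by rw [div_pow]
        simp only [hfdef]
        rw [hdiv, ← Real.rpow_natCast (a/r) 2, ← Real.rpow_mul (by positivity)]
        norm_num
        rw [Real.rpow_neg_one]
        field_simp
  -- pointwise identity
  set C : ℝ := (1 / 2) * a ^ ((n : ℝ) - 1 - lam - α) with hCdef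
  have hpt : ∀ u ∈ Ioo (0:ℝ) 1, |f' u| * g (f u) = C * h u := by
    intro u hu
    obtain ⟨hu0, hu1⟩ := hu
    have hu0' : (0:ℝ) ≤ u := hu0.le
    have h1u : (0:ℝ) < 1 - u := by linarith
    have ha2u : (0:ℝ) < a^2 - u := by nlinarith
    have h1ua : (0:ℝ) < 1 - u / a^2 := by
      rw [sub_pos, div_lt_one (by positivity)]; nlinarith
    have hfu2 : (f u)^2 = a^2 * u⁻¹ := by
      have h2 : (u ^ (-(1/2):ℝ))^2 = u⁻¹ := by
        rw [← Real.rpow_natCast (u ^ (-(1/2):ℝ)) 2, ← Real.rpow_mul hu0']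
        norm_num [Real.rpow_neg_one]
      simp only [hfdef]
      rw [mul_pow, h2]
    have hA1 : a^2 / (f u)^2 = u := by
      rw [hfu2]; field_simp
    have hA2 : (f u)^2 - 1 = (a^2 - u) * u⁻¹ := by
      rw [hfu2]; field_simp
    have hinv : (u⁻¹ : ℝ) ^ (-(α/2)) = u ^ (α/2) := by
      rw [← Real.rpow_neg_one u, ← Real.rpow_mul hu0']
      congr 1; ring
    have hB1 : ((f u)^2 - 1) ^ (-(α/2)) = (a^2-u)^(-(α/2)) * u ^ (α/2) := by
      rw [hA2, Real.mul_rpow ha2u.le (inv_nonneg.2 hu0'), hinv]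
    have hB2 : (a^2 - u) ^ (-(α/2)) = a ^ (-α) * (1 - u/a^2) ^ (-(α/2)) := by
      have hsplit : a^2 - u = a^2 * (1 - u/a^2) := by field_simp
      rw [hsplit, Real.mul_rpow (by positivity) h1ua.le]
      congr 1
      rw [← Real.rpow_natCast a 2, ← Real.rpow_mul ha0.le]
      congr 1; push_cast; ring
    have hB3 : (f u) ^ ((n:ℝ) - lam - 2)
        = a ^ ((n:ℝ)-lam-2) * u ^ (-(1/2) * ((n:ℝ)-lam-2)) := by
      simp only [hfdef]
      rw [Real.mul_rpow ha0.le (Real.rpow_nonneg hu0' _), ← Real.rpow_mul hu0']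
    have hB4 : |f' u| = a/2 * u ^ (-(3/2) : ℝ) := by
      have he : (-(1/2) - 1 : ℝ) = -(3/2) := by norm_num
      simp only [hf'def, he]
      rw [abs_of_nonpos (by nlinarith [Real.rpow_nonneg hu0' (-(3/2):ℝ)])]
      ring
    have hu_split : u ^ p = u ^ (α/2) * u ^ (-(1/2) * ((n:ℝ)-lam-2)) * u ^ (-(3/2):ℝ) := by
      rw [← Real.rpow_add hu0, ← Real.rpow_add hu0, hpdef]
      congr 1; ring
    have ha_split : a ^ ((n:ℝ)-1-lam-α) = a ^ (-α) * a ^ ((n:ℝ)-lam-2) * a := by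
      have hcomb : a ^ (-α) * a ^ ((n:ℝ)-lam-2) * a = a ^ (-α + ((n:ℝ)-lam-2) + 1) := by
        rw [Real.rpow_add ha0, Real.rpow_add ha0, Real.rpow_one]
      rw [hcomb]; congr 1; ring
    simp only [hgdef, hhdef, hCdef]
    rw [hB4, hB1, hB2, hB3, hA1, hu_split, ha_split]
    ring
  -- Integrability of g on Ioi a
  have hgInt : IntegrableOn g (Ioi a) := by
    rw [← himg, integrableOn_image_iff_integrableOn_abs_deriv_smul measurableSet_Ioo hderiv hinj]
    refine IntegrableOn.congr_fun (hInt.const_mul C) ?_ measurableSet_Ioo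
    intro u hu
    simp only [smul_eq_mul]
    exact (hpt u hu).symm
  refine ⟨hgInt, hII, ?_⟩
  have key : ∫ r in Ioi a, g r = ∫ u in Ioo (0:ℝ) 1, |f' u| • g (f u) := by
    rw [← himg]
    exact integral_image_eq_integral_abs_deriv_smul measurableSet_Ioo hderiv hinj g
  rw [key]
  rw [setIntegral_congr_fun measurableSet_Ioo (g := fun u => C * h u)
    (fun u hu => by simp only [smul_eq_mul]; exact hpt u hu)]
  rw [MeasureTheory.integral_const_mul]
  rw [intervalIntegral.integral_of_le zero_le_one, integral_Ioc_eq_integral_Ioo]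
end

section
/- Let n ≥ 2 be an integer and α₁, α₂, λ real numbers with 0 < α₁ < n, α₂ > 0, λ > 0, λ + α₂ > n-1, and 2n-2 < α₁ + α₂ + λ < 3n-2; set σ = 2 + α₁ + α₂ + λ - 2n. Then sup_{w ∈ ℝⁿ} |w|^σ ∫_{ℝⁿ} |x-w|^{-α₁} (1 + |x-w|² + |x|²)^{-(λ+α₂-n)/2 - 1} dx < ∞. -/
open MeasureTheory Real

open Set Metric ENNReal

open MeasureTheory Real Set Metric ENNReal

section Aux

variable {n : ℕ}

local notation "EE" => EuclideanSpace ℝ (Fin n)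

lemma ptw_bound {u v B a b c : ℝ} (hu : 0 < u) (hv : 0 < v) (_hc : 0 ≤ c)
    (hB1 : u ^ 2 ≤ B) (hB2 : v ^ 2 ≤ B) (ha : 0 ≤ a) (hb : 0 ≤ b) :
    u ^ (-c) * B ^ (-(a + b)) ≤ u ^ (-(c + 2 * a)) * v ^ (-(2 * b)) := by
  have hB0 : 0 < B := lt_of_lt_of_le (pow_pos hu 2) hB1
  have h1 : B ^ (-(a+b)) = B ^ (-a) * B ^ (-b) := by
    rw [← Real.rpow_add hB0]; ring_nf
  have h2 : B ^ (-a) ≤ (u ^ 2) ^ (-a) :=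
    Real.rpow_le_rpow_of_nonpos (pow_pos hu 2) hB1 (neg_nonpos.2 ha)
  have h3 : B ^ (-b) ≤ (v ^ 2) ^ (-b) :=
    Real.rpow_le_rpow_of_nonpos (pow_pos hv 2) hB2 (neg_nonpos.2 hb)
  have e2 : (u ^ 2 : ℝ) ^ (-a) = u ^ (-(2*a)) := by
    rw [← Real.rpow_natCast u 2, ← Real.rpow_mul hu.le]; norm_num
  have e3 : (v ^ 2 : ℝ) ^ (-b) = v ^ (-(2*b)) := by
    rw [← Real.rpow_natCast v 2, ← Real.rpow_mul hv.le]; norm_num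
  calc u ^ (-c) * B ^ (-(a+b)) = u ^ (-c) * (B ^ (-a) * B ^ (-b)) := by rw [h1]
    _ ≤ u ^ (-c) * ((u^2) ^ (-a) * (v^2) ^ (-b)) := by
        apply mul_le_mul_of_nonneg_left _ (Real.rpow_nonneg hu.le _)
        exact mul_le_mul h2 h3 (Real.rpow_nonneg hB0.le _) (Real.rpow_nonneg (pow_pos hu 2).le _)
    _ = u ^ (-(c + 2*a)) * v ^ (-(2*b)) := by
        rw [e2, e3, ← mul_assoc, ← Real.rpow_add hu]; ring_nf

lemma ann_bound (γ : ℝ) (hγ : 0 ≤ γ) {ρ : ℝ} (hρ : 0 < ρ) :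
    ∫⁻ x in ball (0 : EE) (2*ρ) \ ball 0 ρ, ENNReal.ofReal (‖x‖ ^ (-γ)) ≤
      ENNReal.ofReal (ρ ^ (-γ) * (2*ρ) ^ (n : ℕ)) * volume (ball (0 : EE) 1) := by
  have hm : MeasurableSet (ball (0 : EE) (2*ρ) \ ball 0 ρ) :=
    measurableSet_ball.diff measurableSet_ball
  calc ∫⁻ x in ball (0 : EE) (2*ρ) \ ball 0 ρ, ENNReal.ofReal (‖x‖ ^ (-γ))
      ≤ ∫⁻ _x in ball (0 : EE) (2*ρ) \ ball 0 ρ, ENNReal.ofReal (ρ ^ (-γ)) := by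
        apply setLIntegral_mono' hm
        intro x hx
        apply ENNReal.ofReal_le_ofReal
        have hxρ : ρ ≤ ‖x‖ := by
          have := hx.2
          simpa [mem_ball_zero_iff, not_lt] using this
        exact Real.rpow_le_rpow_of_nonpos hρ hxρ (neg_nonpos.2 hγ)
    _ = ENNReal.ofReal (ρ ^ (-γ)) * volume (ball (0 : EE) (2*ρ) \ ball 0 ρ) := by
        rw [setLIntegral_const]
    _ ≤ ENNReal.ofReal (ρ ^ (-γ)) * volume (ball (0 : EE) (2*ρ)) := by
        gcongr
        exact diff_subset
    _ = ENNReal.ofReal (ρ ^ (-γ) * (2*ρ) ^ (n : ℕ)) * volume (ball (0 : EE) 1) := by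
        rw [Measure.addHaar_ball_of_pos _ _ (by linarith), finrank_euclideanSpace_fin,
          ENNReal.ofReal_mul (Real.rpow_nonneg hρ.le _), mul_assoc]

lemma term_eq (γ : ℝ) {r : ℝ} (hr : 0 < r) (e : ℝ) :
    (r * (2:ℝ) ^ e) ^ (-γ) * (2 * (r * (2:ℝ) ^ e)) ^ (n : ℕ) =
      r ^ ((n:ℝ) - γ) * (2:ℝ) ^ (e * (-γ) + (e + 1) * n) := by
  have h2 : (0:ℝ) < 2 := two_pos
  have hre : (0:ℝ) < (2:ℝ) ^ e := Real.rpow_pos_of_pos h2 e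
  have e1 : (r * (2:ℝ) ^ e) ^ (-γ) = r ^ (-γ) * (2:ℝ) ^ (e * (-γ)) := by
    rw [Real.mul_rpow hr.le hre.le, ← Real.rpow_mul h2.le]
  have h2e : 2 * (r * (2:ℝ) ^ e) = r * (2:ℝ) ^ (e + 1) := by
    rw [Real.rpow_add_one (by norm_num : (2:ℝ) ≠ 0)]; ring
  have e2 : (2 * (r * (2:ℝ) ^ e)) ^ (n : ℕ) = r ^ ((n:ℝ)) * (2:ℝ) ^ ((e+1) * n) := by
    rw [h2e, mul_pow, ← Real.rpow_natCast r n, ← Real.rpow_natCast ((2:ℝ) ^ (e+1)) n,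
      ← Real.rpow_mul h2.le]
  rw [e1, e2]
  rw [show r ^ (-γ) * (2:ℝ) ^ (e * -γ) * (r ^ ((n:ℝ)) * (2:ℝ) ^ ((e+1) * n)) =
      (r ^ ((n:ℝ)) * r ^ (-γ)) * ((2:ℝ) ^ (e * -γ) * (2:ℝ) ^ ((e+1) * n)) by ring,
    ← Real.rpow_add hr, ← Real.rpow_add h2, ← sub_eq_add_neg]

lemma vol_zero (hn : 0 < n) : volume ({(0:EE)} : Set EE) = 0 := by
  haveI : Nontrivial EE := by
    refine nontrivial_of_ne (EuclideanSpace.single ⟨0, hn⟩ 1) 0 ?_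
    intro h
    have := congrFun (congrArg (fun v : EE => (v : Fin n → ℝ)) h) ⟨0, hn⟩
    simpa [EuclideanSpace.single] using this
  exact measure_singleton 0

lemma lint_drop_zero (hn : 0 < n) (s : Set EE) (g : EE → ℝ≥0∞) :
    ∫⁻ x in s, g x ≤ ∫⁻ x in s \ {0}, g x := by
  calc ∫⁻ x in s, g x ≤ ∫⁻ x in (s \ {0}) ∪ {0}, g x :=
        lintegral_mono_set (by intro x hx; by_cases h : x = 0 <;> simp [h, hx])
    _ ≤ (∫⁻ x in s \ {0}, g x) + ∫⁻ x in ({0} : Set EE), g x := lintegral_union_le _ _ _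
    _ = ∫⁻ x in s \ {0}, g x := by
        rw [setLIntegral_measure_zero _ _ (vol_zero hn), add_zero]

lemma main_rpow_bound (hn : 0 < n) (γ : ℝ) (hγ0 : 0 ≤ γ) (ε δ : ℝ)
    (hc : ε * ((n:ℝ) - γ) < 0) (S : ℝ → Set EE)
    (hcov : ∀ r : ℝ, 0 < r → S r \ {0} ⊆
      ⋃ k : ℕ, (ball (0:EE) (2 * (r * (2:ℝ) ^ (ε*k+δ))) \ ball 0 (r * (2:ℝ) ^ (ε*k+δ)))) :
    ∃ K : ℝ≥0∞, K ≠ ∞ ∧ ∀ r : ℝ, 0 < r →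
      ∫⁻ x in S r, ENNReal.ofReal (‖x‖ ^ (-γ)) ≤ ENNReal.ofReal (r ^ ((n:ℝ) - γ)) * K := by
  set c : ℝ := (2:ℝ) ^ (ε * ((n:ℝ) - γ)) with hc_def
  set A : ℝ := (2:ℝ) ^ (δ * ((n:ℝ) - γ) + n) with hA_def
  have hc1 : c < 1 := Real.rpow_lt_one_of_one_lt_of_neg one_lt_two hc
  have hc1' : ENNReal.ofReal c < 1 := by
    rw [← ENNReal.ofReal_one]
    exact ENNReal.ofReal_lt_ofReal_iff_of_nonneg (Real.rpow_nonneg (by norm_num) _) |>.2 hc1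
  refine ⟨ENNReal.ofReal A * volume (ball (0:EE) 1) * (1 - ENNReal.ofReal c)⁻¹, ?_, ?_⟩
  · apply ENNReal.mul_ne_top (ENNReal.mul_ne_top ENNReal.ofReal_ne_top
      (measure_ball_lt_top).ne)
    rw [ENNReal.inv_ne_top]
    intro h
    rw [tsub_eq_zero_iff_le] at h
    exact absurd (lt_of_lt_of_le hc1' h) (lt_irrefl _)
  · intro r hr
    set ρ : ℕ → ℝ := fun k => r * (2:ℝ) ^ (ε*k+δ) with hρ_def
    have hρpos : ∀ k, 0 < ρ k := fun k => mul_pos hr (Real.rpow_pos_of_pos two_pos _)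
    have step1 : ∫⁻ x in S r, ENNReal.ofReal (‖x‖ ^ (-γ)) ≤
        ∑' k : ℕ, ∫⁻ x in ball (0:EE) (2 * ρ k) \ ball 0 (ρ k), ENNReal.ofReal (‖x‖ ^ (-γ)) := by
      calc ∫⁻ x in S r, ENNReal.ofReal (‖x‖ ^ (-γ))
          ≤ ∫⁻ x in S r \ {0}, ENNReal.ofReal (‖x‖ ^ (-γ)) := lint_drop_zero hn _ _
        _ ≤ ∫⁻ x in ⋃ k : ℕ, (ball (0:EE) (2 * ρ k) \ ball 0 (ρ k)),
              ENNReal.ofReal (‖x‖ ^ (-γ)) := lintegral_mono_set (hcov r hr)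
        _ ≤ ∑' k : ℕ, ∫⁻ x in ball (0:EE) (2 * ρ k) \ ball 0 (ρ k),
              ENNReal.ofReal (‖x‖ ^ (-γ)) := lintegral_iUnion_le _ _
    have step2 : ∀ k : ℕ, ∫⁻ x in ball (0:EE) (2 * ρ k) \ ball 0 (ρ k),
        ENNReal.ofReal (‖x‖ ^ (-γ)) ≤
        (ENNReal.ofReal (r ^ ((n:ℝ) - γ)) * ENNReal.ofReal A * volume (ball (0:EE) 1))
          * (ENNReal.ofReal c) ^ k := by
      intro k
      refine (ann_bound γ hγ0 (hρpos k)).trans ?_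
      have he : ρ k ^ (-γ) * (2 * ρ k) ^ (n:ℕ) =
          r ^ ((n:ℝ) - γ) * (A * c ^ k) := by
        rw [hρ_def]
        rw [term_eq γ hr (ε*k+δ)]
        congr 1
        have : (ε*k+δ) * (-γ) + ((ε*k+δ) + 1) * n
            = (k:ℝ) * (ε * ((n:ℝ) - γ)) + (δ * ((n:ℝ) - γ) + n) := by ring
        rw [this, Real.rpow_add two_pos, hA_def, hc_def, ← Real.rpow_natCast
          ((2:ℝ) ^ (ε * ((n:ℝ) - γ))) k, ← Real.rpow_mul (by norm_num : (0:ℝ) ≤ 2),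
          mul_comm ((k:ℝ)) _]
        ring
      rw [he]
      rw [ENNReal.ofReal_mul (Real.rpow_nonneg hr.le _),
        ENNReal.ofReal_mul (Real.rpow_nonneg two_pos.le _),
        ENNReal.ofReal_pow (Real.rpow_nonneg two_pos.le _)]
      exact le_of_eq (by ring)
    calc ∫⁻ x in S r, ENNReal.ofReal (‖x‖ ^ (-γ))
        ≤ ∑' k : ℕ, (ENNReal.ofReal (r ^ ((n:ℝ) - γ)) * ENNReal.ofReal A
            * volume (ball (0:EE) 1)) * (ENNReal.ofReal c) ^ k :=
          step1.trans (ENNReal.tsum_le_tsum step2)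
      _ = (ENNReal.ofReal (r ^ ((n:ℝ) - γ)) * ENNReal.ofReal A * volume (ball (0:EE) 1))
            * (1 - ENNReal.ofReal c)⁻¹ := by
          rw [ENNReal.tsum_mul_left, ENNReal.tsum_geometric]
      _ = ENNReal.ofReal (r ^ ((n:ℝ) - γ)) *
          (ENNReal.ofReal A * volume (ball (0:EE) 1) * (1 - ENNReal.ofReal c)⁻¹) := by ring

lemma cov_ball {r : ℝ} (hr : 0 < r) :
    ball (0:EE) r \ {0} ⊆
      ⋃ k : ℕ, (ball (0:EE) (2 * (r * (2:ℝ) ^ ((-1:ℝ)*k+(-1)))) \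
        ball 0 (r * (2:ℝ) ^ ((-1:ℝ)*k+(-1)))) := by
  intro x hx
  have hx0 : x ≠ 0 := hx.2
  have hxn : 0 < ‖x‖ := norm_pos_iff.2 hx0
  have hxr : ‖x‖ < r := mem_ball_zero_iff.1 hx.1
  obtain ⟨m, hm1, hm2⟩ := exists_mem_Ico_zpow (div_pos hxn hr) one_lt_two
  have hmneg : m < 0 := by
    by_contra h
    push_neg at h
    have h1 : (1:ℝ) ≤ (2:ℝ) ^ m := one_le_zpow₀ one_le_two h
    have h2 : (1:ℝ) ≤ ‖x‖ / r := h1.trans hm1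
    rw [one_le_div hr] at h2
    linarith
  set k : ℕ := (-(m+1)).toNat with hk_def
  have hkZ : (k:ℤ) = -(m+1) := Int.toNat_of_nonneg (by omega)
  have hkR : (k:ℝ) = -(m:ℝ) - 1 := by
    have := congrArg (fun z : ℤ => (z : ℝ)) hkZ
    push_cast at this
    linarith
  have hρ : r * (2:ℝ) ^ ((-1:ℝ)*k+(-1)) = r * (2:ℝ) ^ (m:ℤ) := by
    congr 1
    rw [← Real.rpow_intCast 2 m]
    congr 1
    rw [hkR]; ring
  have h2ρ : 2 * (r * (2:ℝ) ^ ((-1:ℝ)*k+(-1))) = r * (2:ℝ) ^ (m+1 : ℤ) := by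
    rw [hρ, zpow_add_one₀ (by norm_num : (2:ℝ) ≠ 0)]
    ring
  refine mem_iUnion.2 ⟨k, ?_, ?_⟩
  · rw [mem_ball_zero_iff, h2ρ]
    rw [div_lt_iff₀ hr] at hm2
    linarith
  · rw [mem_ball_zero_iff, hρ, not_lt]
    rw [le_div_iff₀ hr] at hm1
    linarith

lemma cov_compl {r : ℝ} (hr : 0 < r) :
    (ball (0:EE) r)ᶜ \ {0} ⊆
      ⋃ k : ℕ, (ball (0:EE) (2 * (r * (2:ℝ) ^ ((1:ℝ)*k+0))) \
        ball 0 (r * (2:ℝ) ^ ((1:ℝ)*k+0))) := by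
  intro x hx
  have hxr : r ≤ ‖x‖ := by
    have := hx.1
    rw [mem_compl_iff, mem_ball_zero_iff, not_lt] at this
    exact this
  have hxn : 0 < ‖x‖ := lt_of_lt_of_le hr hxr
  obtain ⟨m, hm1, hm2⟩ := exists_mem_Ico_zpow (div_pos hxn hr) one_lt_two
  have hmpos : 0 ≤ m := by
    by_contra h
    push_neg at h
    have h1 : (2:ℝ) ^ (m+1) ≤ (2:ℝ) ^ (0:ℤ) := zpow_le_zpow_right₀ one_le_two (by omega)
    have h2 : (1:ℝ) ≤ ‖x‖ / r := (one_le_div hr).2 hxr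
    simp only [zpow_zero] at h1
    linarith
  set k : ℕ := m.toNat with hk_def
  have hkZ : (k:ℤ) = m := Int.toNat_of_nonneg hmpos
  have hkR : (k:ℝ) = (m:ℝ) := by exact_mod_cast congrArg (fun z : ℤ => (z : ℝ)) hkZ
  have hρ : r * (2:ℝ) ^ ((1:ℝ)*k+0) = r * (2:ℝ) ^ (m:ℤ) := by
    congr 1
    rw [← Real.rpow_intCast 2 m]
    congr 1
    rw [hkR]; ring
  have h2ρ : 2 * (r * (2:ℝ) ^ ((1:ℝ)*k+0)) = r * (2:ℝ) ^ (m+1 : ℤ) := by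
    rw [hρ, zpow_add_one₀ (by norm_num : (2:ℝ) ≠ 0)]
    ring
  refine mem_iUnion.2 ⟨k, ?_, ?_⟩
  · rw [mem_ball_zero_iff, h2ρ]
    rw [div_lt_iff₀ hr] at hm2
    linarith
  · rw [mem_ball_zero_iff, hρ, not_lt]
    rw [le_div_iff₀ hr] at hm1
    linarith

lemma ball_rpow_bound (hn : 0 < n) {γ : ℝ} (hγ0 : 0 ≤ γ) (hγn : γ < (n:ℝ)) :
    ∃ K : ℝ≥0∞, K ≠ ∞ ∧ ∀ r : ℝ, 0 < r →
      ∫⁻ x in ball (0:EE) r, ENNReal.ofReal (‖x‖ ^ (-γ)) ≤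
        ENNReal.ofReal (r ^ ((n:ℝ) - γ)) * K :=
  main_rpow_bound hn γ hγ0 (-1) (-1) (by linarith) (fun r => ball 0 r)
    (fun r hr => cov_ball hr)

lemma compl_rpow_bound (hn : 0 < n) {γ : ℝ} (hγn : (n:ℝ) < γ) :
    ∃ K : ℝ≥0∞, K ≠ ∞ ∧ ∀ r : ℝ, 0 < r →
      ∫⁻ x in (ball (0:EE) r)ᶜ, ENNReal.ofReal (‖x‖ ^ (-γ)) ≤
        ENNReal.ofReal (r ^ ((n:ℝ) - γ)) * K := by
  have hn' : (0:ℝ) ≤ (n:ℝ) := Nat.cast_nonneg n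
  exact main_rpow_bound hn γ (by linarith) 1 0 (by linarith) (fun r => (ball 0 r)ᶜ)
    (fun r hr => cov_compl hr)

lemma shift_ball (w : EE) (r γ : ℝ) :
    ∫⁻ x in ball w r, ENNReal.ofReal (‖x - w‖ ^ (-γ)) =
      ∫⁻ x in ball (0:EE) r, ENNReal.ofReal (‖x‖ ^ (-γ)) := by
  rw [← lintegral_indicator measurableSet_ball, ← lintegral_indicator measurableSet_ball]
  have h : ∀ x : EE, indicator (ball w r) (fun x => ENNReal.ofReal (‖x - w‖ ^ (-γ))) x
      = indicator (ball (0:EE) r) (fun y => ENNReal.ofReal (‖y‖ ^ (-γ))) (x - w) := by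
    intro x
    by_cases h : x ∈ ball w r
    · rw [indicator_of_mem h, indicator_of_mem (by rwa [mem_ball_zero_iff, ← mem_ball_iff_norm])]
    · rw [indicator_of_notMem h, indicator_of_notMem (by
        rw [mem_ball_zero_iff, ← mem_ball_iff_norm]; exact h)]
  simp_rw [h]
  exact lintegral_sub_right_eq_self _ w

end Aux

set_option maxHeartbeats 1000000 in
/-- Step 1 of the proof of Theorem 3 of the paper: the uniform bound
`sup_w |w|^σ ∫ |x-w|^{-α₁} (1+|x-w|²+|x|²)^{-(λ+α₂-n)/2-1} dx < ∞`. -/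
theorem multilinear_embedding_stmt4 (n : ℕ) (hn : 2 ≤ n) (α₁ α₂ lam σ : ℝ)
    (hα₁0 : 0 < α₁) (hα₁n : α₁ < (n : ℝ)) (hα₂ : 0 < α₂) (hlam : 0 < lam)
    (h1 : (n : ℝ) - 1 < lam + α₂)
    (h2 : 2 * (n : ℝ) - 2 < α₁ + α₂ + lam) (h3 : α₁ + α₂ + lam < 3 * (n : ℝ) - 2)
    (hσ : σ = 2 + α₁ + α₂ + lam - 2 * (n : ℝ)) :
    ∃ C : ℝ, ∀ w : EuclideanSpace ℝ (Fin n),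
      ‖w‖ ^ σ *
        ∫ x : EuclideanSpace ℝ (Fin n),
          ‖x - w‖ ^ (-α₁) *
            (1 + ‖x - w‖ ^ 2 + ‖x‖ ^ 2) ^ (-(lam + α₂ - (n : ℝ)) / 2 - 1)
        ≤ C := by
  have hn0 : 0 < n := by omega
  have hσ0 : 0 < σ := by rw [hσ]; linarith
  have hσn : σ < (n:ℝ) := by rw [hσ]; linarith
  set β : ℝ := (lam + α₂ - (n:ℝ)) / 2 + 1 with hβ_def
  have hβ2 : 2 * β = lam + α₂ - (n:ℝ) + 2 := by rw [hβ_def]; ring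
  have hβpos : 0 < β := by rw [hβ_def]; linarith
  have hσβ : σ = α₁ + 2*β - (n:ℝ) := by rw [hσ]; linarith
  set b : ℝ := min β ((σ + (n:ℝ))/4) with hb_def
  set a : ℝ := β - b with ha_def
  have hbβ : b ≤ β := min_le_left _ _
  have hb4 : b ≤ (σ + (n:ℝ))/4 := min_le_right _ _
  have hb0 : 0 ≤ b := le_min hβpos.le (by linarith)
  have ha0 : 0 ≤ a := by rw [ha_def]; linarith
  have hbσ : σ / 2 < b := lt_min (by linarith) (by linarith)
  set γ₁ : ℝ := α₁ + 2*a with hγ₁_def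
  set γ₂ : ℝ := 2*b with hγ₂_def
  have hγ₁0 : 0 ≤ γ₁ := by rw [hγ₁_def]; linarith
  have hγ₂0 : 0 ≤ γ₂ := by rw [hγ₂_def]; linarith
  have hγ₁n : γ₁ < (n:ℝ) := by rw [hγ₁_def, ha_def]; linarith
  have hγ₂n : γ₂ < (n:ℝ) := by rw [hγ₂_def]; linarith
  have hsum : γ₁ + γ₂ = (n:ℝ) + σ := by rw [hγ₁_def, hγ₂_def, ha_def]; linarith
  have hab : a + b = β := by rw [ha_def]; ring
  have hexp : -(lam + α₂ - (n:ℝ)) / 2 - 1 = -(a+b) := by rw [hab, hβ_def]; ring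
  obtain ⟨K₁, hK₁top, hK₁⟩ := ball_rpow_bound (n := n) hn0 hγ₁0 hγ₁n
  obtain ⟨K₂, hK₂top, hK₂⟩ := ball_rpow_bound (n := n) hn0 hγ₂0 hγ₂n
  obtain ⟨KT, hKTtop, hKT⟩ := compl_rpow_bound (n := n) hn0 (by linarith : (n:ℝ) < γ₁ + γ₂)
  obtain ⟨KA, hKAtop, hKA⟩ := ball_rpow_bound (n := n) hn0 hα₁0.le hα₁n
  set D : ℝ≥0∞ := K₂ + K₁ + ENNReal.ofReal ((4:ℝ) ^ γ₁) * KT with hD_def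
  have hDtop : D ≠ ∞ := by
    rw [hD_def]
    exact ENNReal.add_ne_top.2 ⟨ENNReal.add_ne_top.2 ⟨hK₂top, hK₁top⟩,
      ENNReal.mul_ne_top ENNReal.ofReal_ne_top hKTtop⟩
  refine ⟨max ((2:ℝ) ^ σ * D.toReal) ((KA + KT).toReal), fun w => ?_⟩
  set f : EuclideanSpace ℝ (Fin n) → ℝ := fun x =>
    ‖x - w‖ ^ (-α₁) * (1 + ‖x - w‖ ^ 2 + ‖x‖ ^ 2) ^ (-(lam + α₂ - (n : ℝ)) / 2 - 1) with hf_def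
  have hf0 : ∀ x, 0 ≤ f x := fun x =>
    mul_nonneg (Real.rpow_nonneg (norm_nonneg _) _) (Real.rpow_nonneg (by positivity) _)
  have hfm : Measurable f := by
    rw [hf_def]
    measurability
  have hfx : ∀ x, f x = ‖x - w‖ ^ (-α₁) * (1 + ‖x - w‖ ^ 2 + ‖x‖ ^ 2) ^ (-(a+b)) := by
    intro x; rw [hf_def]; rw [hexp]
  have hint : ∫ x, f x = (∫⁻ x, ENNReal.ofReal (f x)).toReal :=
    integral_eq_lintegral_of_nonneg_ae (Filter.Eventually.of_forall hf0)
      hfm.aestronglyMeasurable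
  rcases le_or_gt 1 ‖w‖ with hw | hw
  · -- large ‖w‖
    have hw0 : (0:ℝ) < ‖w‖ := lt_of_lt_of_le one_pos hw
    set r : ℝ := ‖w‖ / 2 with hr_def
    have hr : 0 < r := by rw [hr_def]; linarith
    have hw2 : ‖w‖ = 2 * r := by rw [hr_def]; ring
    -- Region A
    have hA : ∫⁻ x in ball (0 : EuclideanSpace ℝ (Fin n)) r, ENNReal.ofReal (f x)
        ≤ ENNReal.ofReal (r ^ (-σ)) * K₂ := by
      have hpt : ∀ x ∈ ball (0 : EuclideanSpace ℝ (Fin n)) r \ {0},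
          ENNReal.ofReal (f x) ≤
            ENNReal.ofReal (r ^ (-γ₁)) * ENNReal.ofReal (‖x‖ ^ (-γ₂)) := by
        intro x hx
        have hx0 : (0:ℝ) < ‖x‖ := norm_pos_iff.2 hx.2
        have hxr : ‖x‖ < r := mem_ball_zero_iff.1 hx.1
        have hxw : r ≤ ‖x - w‖ := by
          have h' : ‖w‖ - ‖x‖ ≤ ‖w - x‖ := by
            have := norm_sub_norm_le w x
            linarith
          rw [norm_sub_rev] at h'
          linarith
        have hsq : r ^ 2 ≤ ‖x - w‖ ^ 2 := by gcongr
        have hB1 : r ^ 2 ≤ 1 + ‖x - w‖ ^ 2 + ‖x‖ ^ 2 := by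
          have := sq_nonneg ‖x‖; linarith
        have hB2 : ‖x‖ ^ 2 ≤ 1 + ‖x - w‖ ^ 2 + ‖x‖ ^ 2 := by
          have := sq_nonneg ‖x - w‖; linarith
        rw [← ENNReal.ofReal_mul (Real.rpow_nonneg hr.le _)]
        apply ENNReal.ofReal_le_ofReal
        calc f x = ‖x - w‖ ^ (-α₁) * (1 + ‖x - w‖ ^ 2 + ‖x‖ ^ 2) ^ (-(a+b)) := hfx x
          _ ≤ r ^ (-α₁) * (1 + ‖x - w‖ ^ 2 + ‖x‖ ^ 2) ^ (-(a+b)) := by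
              apply mul_le_mul_of_nonneg_right
                (Real.rpow_le_rpow_of_nonpos hr hxw (neg_nonpos.2 hα₁0.le))
                (Real.rpow_nonneg (by positivity) _)
          _ ≤ r ^ (-(α₁ + 2*a)) * ‖x‖ ^ (-(2*b)) :=
              ptw_bound hr hx0 hα₁0.le hB1 hB2 ha0 hb0
          _ = r ^ (-γ₁) * ‖x‖ ^ (-γ₂) := by rw [hγ₁_def, hγ₂_def]
      calc ∫⁻ x in ball (0 : EuclideanSpace ℝ (Fin n)) r, ENNReal.ofReal (f x)
          ≤ ∫⁻ x in ball (0 : EuclideanSpace ℝ (Fin n)) r \ {0}, ENNReal.ofReal (f x) :=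
            lint_drop_zero hn0 _ _
        _ ≤ ∫⁻ x in ball (0 : EuclideanSpace ℝ (Fin n)) r \ {0},
              ENNReal.ofReal (r ^ (-γ₁)) * ENNReal.ofReal (‖x‖ ^ (-γ₂)) :=
            setLIntegral_mono' (measurableSet_ball.diff (measurableSet_singleton _)) hpt
        _ ≤ ∫⁻ x in ball (0 : EuclideanSpace ℝ (Fin n)) r,
              ENNReal.ofReal (r ^ (-γ₁)) * ENNReal.ofReal (‖x‖ ^ (-γ₂)) :=
            lintegral_mono_set diff_subset
        _ = ENNReal.ofReal (r ^ (-γ₁)) *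
              ∫⁻ x in ball (0 : EuclideanSpace ℝ (Fin n)) r, ENNReal.ofReal (‖x‖ ^ (-γ₂)) :=
            lintegral_const_mul' _ _ ENNReal.ofReal_ne_top
        _ ≤ ENNReal.ofReal (r ^ (-γ₁)) * (ENNReal.ofReal (r ^ ((n:ℝ) - γ₂)) * K₂) := by
            gcongr
            exact hK₂ r hr
        _ = ENNReal.ofReal (r ^ (-σ)) * K₂ := by
            rw [← mul_assoc, ← ENNReal.ofReal_mul (Real.rpow_nonneg hr.le _),
              ← Real.rpow_add hr, show -γ₁ + ((n:ℝ) - γ₂) = -σ by linarith]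
    -- Region B
    have hB : ∫⁻ x in ball w r, ENNReal.ofReal (f x)
        ≤ ENNReal.ofReal (r ^ (-σ)) * K₁ := by
      have hpt : ∀ x ∈ ball w r,
          ENNReal.ofReal (f x) ≤
            ENNReal.ofReal (‖x - w‖ ^ (-γ₁)) * ENNReal.ofReal (r ^ (-γ₂)) := by
        intro x hx
        have hxw : ‖x - w‖ < r := mem_ball_iff_norm.1 hx
        rcases eq_or_ne x w with rfl | hne
        · have : f x = 0 := by
            rw [hfx]
            simp only [sub_self, norm_zero]
            rw [Real.zero_rpow (by linarith : -α₁ ≠ 0), zero_mul]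
          rw [this, ENNReal.ofReal_zero]
          exact zero_le
        · have hu : (0:ℝ) < ‖x - w‖ := norm_pos_iff.2 (sub_ne_zero.2 hne)
          have hxn : r ≤ ‖x‖ := by
            have h' : ‖w‖ - ‖w - x‖ ≤ ‖x‖ := by
              have := norm_sub_norm_le w x
              linarith [norm_sub_norm_le w x]
            rw [norm_sub_rev w x] at h'
            linarith
          have hB1 : ‖x - w‖ ^ 2 ≤ 1 + ‖x - w‖ ^ 2 + ‖x‖ ^ 2 := by
            have := sq_nonneg ‖x‖; linarith
          have hsq : r ^ 2 ≤ ‖x‖ ^ 2 := by gcongr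
          have hB2 : r ^ 2 ≤ 1 + ‖x - w‖ ^ 2 + ‖x‖ ^ 2 := by
            have := sq_nonneg ‖x - w‖; linarith
          rw [← ENNReal.ofReal_mul (Real.rpow_nonneg (norm_nonneg _) _)]
          apply ENNReal.ofReal_le_ofReal
          calc f x = ‖x - w‖ ^ (-α₁) * (1 + ‖x - w‖ ^ 2 + ‖x‖ ^ 2) ^ (-(a+b)) := hfx x
            _ ≤ ‖x - w‖ ^ (-(α₁ + 2*a)) * r ^ (-(2*b)) :=
                ptw_bound hu hr hα₁0.le hB1 hB2 ha0 hb0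
            _ = ‖x - w‖ ^ (-γ₁) * r ^ (-γ₂) := by rw [hγ₁_def, hγ₂_def]
      calc ∫⁻ x in ball w r, ENNReal.ofReal (f x)
          ≤ ∫⁻ x in ball w r,
              ENNReal.ofReal (‖x - w‖ ^ (-γ₁)) * ENNReal.ofReal (r ^ (-γ₂)) :=
            setLIntegral_mono' measurableSet_ball hpt
        _ = (∫⁻ x in ball w r, ENNReal.ofReal (‖x - w‖ ^ (-γ₁))) * ENNReal.ofReal (r ^ (-γ₂)) :=
            lintegral_mul_const' _ _ ENNReal.ofReal_ne_top
        _ = (∫⁻ x in ball (0 : EuclideanSpace ℝ (Fin n)) r, ENNReal.ofReal (‖x‖ ^ (-γ₁))) *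
              ENNReal.ofReal (r ^ (-γ₂)) := by rw [shift_ball]
        _ ≤ (ENNReal.ofReal (r ^ ((n:ℝ) - γ₁)) * K₁) * ENNReal.ofReal (r ^ (-γ₂)) := by
            gcongr
            exact hK₁ r hr
        _ = ENNReal.ofReal (r ^ (-σ)) * K₁ := by
            rw [mul_comm _ (ENNReal.ofReal (r ^ (-γ₂))), ← mul_assoc,
              ← ENNReal.ofReal_mul (Real.rpow_nonneg hr.le _), ← Real.rpow_add hr,
              show -γ₂ + ((n:ℝ) - γ₁) = -σ by linarith]
    -- Region C
    have hC : ∫⁻ x in (ball (0 : EuclideanSpace ℝ (Fin n)) r ∪ ball w r)ᶜ,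
        ENNReal.ofReal (f x)
        ≤ ENNReal.ofReal (r ^ (-σ)) * (ENNReal.ofReal ((4:ℝ) ^ γ₁) * KT) := by
      have hpt : ∀ x ∈ (ball (0 : EuclideanSpace ℝ (Fin n)) r ∪ ball w r)ᶜ,
          ENNReal.ofReal (f x) ≤
            ENNReal.ofReal ((4:ℝ) ^ γ₁) * ENNReal.ofReal (‖x‖ ^ (-(γ₁+γ₂))) := by
        intro x hx
        rw [mem_compl_iff, mem_union, not_or] at hx
        have hx1 : r ≤ ‖x‖ := by
          have := hx.1
          rw [mem_ball_zero_iff, not_lt] at this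
          exact this
        have hx2 : r ≤ ‖x - w‖ := by
          have := hx.2
          rw [mem_ball_iff_norm, not_lt] at this
          exact this
        have hx0 : (0:ℝ) < ‖x‖ := lt_of_lt_of_le hr hx1
        have hu : (0:ℝ) < ‖x - w‖ := lt_of_lt_of_le hr hx2
        have h4 : ‖x‖ / 4 ≤ ‖x - w‖ := by
          rcases le_or_gt ‖x‖ (4*r) with h | h
          · linarith
          · have h' : ‖x‖ - ‖w‖ ≤ ‖x - w‖ := by
              have := norm_sub_norm_le x w
              linarith
            rw [hw2] at h'
            linarith
        have hB1 : ‖x - w‖ ^ 2 ≤ 1 + ‖x - w‖ ^ 2 + ‖x‖ ^ 2 := by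
          have := sq_nonneg ‖x‖; linarith
        have hB2 : ‖x‖ ^ 2 ≤ 1 + ‖x - w‖ ^ 2 + ‖x‖ ^ 2 := by
          have := sq_nonneg ‖x - w‖; linarith
        rw [← ENNReal.ofReal_mul (by positivity)]
        apply ENNReal.ofReal_le_ofReal
        calc f x = ‖x - w‖ ^ (-α₁) * (1 + ‖x - w‖ ^ 2 + ‖x‖ ^ 2) ^ (-(a+b)) := hfx x
          _ ≤ ‖x - w‖ ^ (-(α₁ + 2*a)) * ‖x‖ ^ (-(2*b)) :=
              ptw_bound hu hx0 hα₁0.le hB1 hB2 ha0 hb0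
          _ = ‖x - w‖ ^ (-γ₁) * ‖x‖ ^ (-γ₂) := by rw [hγ₁_def, hγ₂_def]
          _ ≤ (‖x‖ / 4) ^ (-γ₁) * ‖x‖ ^ (-γ₂) := by
              apply mul_le_mul_of_nonneg_right
                (Real.rpow_le_rpow_of_nonpos (by positivity) h4 (neg_nonpos.2 hγ₁0))
                (Real.rpow_nonneg (norm_nonneg _) _)
          _ = (4:ℝ) ^ γ₁ * ‖x‖ ^ (-(γ₁+γ₂)) := by
              rw [div_eq_mul_inv, Real.mul_rpow (norm_nonneg x) (by norm_num),
                Real.inv_rpow (by norm_num), Real.rpow_neg (by norm_num : (0:ℝ) ≤ 4), inv_inv]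
              rw [show ‖x‖ ^ (-γ₁) * (4:ℝ) ^ γ₁ * ‖x‖ ^ (-γ₂) =
                (4:ℝ) ^ γ₁ * (‖x‖ ^ (-γ₁) * ‖x‖ ^ (-γ₂)) by ring, ← Real.rpow_add hx0]
              ring_nf
      calc ∫⁻ x in (ball (0 : EuclideanSpace ℝ (Fin n)) r ∪ ball w r)ᶜ, ENNReal.ofReal (f x)
          ≤ ∫⁻ x in (ball (0 : EuclideanSpace ℝ (Fin n)) r ∪ ball w r)ᶜ,
              ENNReal.ofReal ((4:ℝ) ^ γ₁) * ENNReal.ofReal (‖x‖ ^ (-(γ₁+γ₂))) :=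
            setLIntegral_mono' (measurableSet_ball.union measurableSet_ball).compl hpt
        _ ≤ ∫⁻ x in (ball (0 : EuclideanSpace ℝ (Fin n)) r)ᶜ,
              ENNReal.ofReal ((4:ℝ) ^ γ₁) * ENNReal.ofReal (‖x‖ ^ (-(γ₁+γ₂))) :=
            lintegral_mono_set (compl_subset_compl.2 subset_union_left)
        _ = ENNReal.ofReal ((4:ℝ) ^ γ₁) *
              ∫⁻ x in (ball (0 : EuclideanSpace ℝ (Fin n)) r)ᶜ,
                ENNReal.ofReal (‖x‖ ^ (-(γ₁+γ₂))) :=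
            lintegral_const_mul' _ _ ENNReal.ofReal_ne_top
        _ ≤ ENNReal.ofReal ((4:ℝ) ^ γ₁) * (ENNReal.ofReal (r ^ ((n:ℝ) - (γ₁+γ₂))) * KT) := by
            gcongr
            exact hKT r hr
        _ = ENNReal.ofReal (r ^ (-σ)) * (ENNReal.ofReal ((4:ℝ) ^ γ₁) * KT) := by
            rw [show (n:ℝ) - (γ₁+γ₂) = -σ by linarith]
            ring
    -- combine
    have htot : ∫⁻ x, ENNReal.ofReal (f x) ≤ ENNReal.ofReal (r ^ (-σ)) * D := by
      have hu : (ball (0 : EuclideanSpace ℝ (Fin n)) r ∪ ball w r) ∪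
          (ball (0 : EuclideanSpace ℝ (Fin n)) r ∪ ball w r)ᶜ = univ := union_compl_self _
      calc ∫⁻ x, ENNReal.ofReal (f x)
          = ∫⁻ x in univ, ENNReal.ofReal (f x) := (setLIntegral_univ _).symm
        _ = ∫⁻ x in (ball (0 : EuclideanSpace ℝ (Fin n)) r ∪ ball w r) ∪
              (ball (0 : EuclideanSpace ℝ (Fin n)) r ∪ ball w r)ᶜ,
              ENNReal.ofReal (f x) := by rw [hu]
        _ ≤ (∫⁻ x in ball (0 : EuclideanSpace ℝ (Fin n)) r ∪ ball w r,
              ENNReal.ofReal (f x)) +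
            ∫⁻ x in (ball (0 : EuclideanSpace ℝ (Fin n)) r ∪ ball w r)ᶜ,
              ENNReal.ofReal (f x) := lintegral_union_le _ _ _
        _ ≤ ((∫⁻ x in ball (0 : EuclideanSpace ℝ (Fin n)) r, ENNReal.ofReal (f x)) +
              ∫⁻ x in ball w r, ENNReal.ofReal (f x)) +
            ∫⁻ x in (ball (0 : EuclideanSpace ℝ (Fin n)) r ∪ ball w r)ᶜ,
              ENNReal.ofReal (f x) := by
            gcongr
            exact lintegral_union_le _ _ _
        _ ≤ (ENNReal.ofReal (r ^ (-σ)) * K₂ + ENNReal.ofReal (r ^ (-σ)) * K₁) +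
            ENNReal.ofReal (r ^ (-σ)) * (ENNReal.ofReal ((4:ℝ) ^ γ₁) * KT) :=
            add_le_add (add_le_add hA hB) hC
        _ = ENNReal.ofReal (r ^ (-σ)) * D := by rw [hD_def]; ring
    rw [hint]
    have h1 : (∫⁻ x, ENNReal.ofReal (f x)).toReal ≤ r ^ (-σ) * D.toReal := by
      have := ENNReal.toReal_mono (ENNReal.mul_ne_top ENNReal.ofReal_ne_top hDtop) htot
      rwa [ENNReal.toReal_mul, ENNReal.toReal_ofReal (Real.rpow_nonneg hr.le _)] at this
    have h2 : ‖w‖ ^ σ * (∫⁻ x, ENNReal.ofReal (f x)).toReal ≤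
        ‖w‖ ^ σ * (r ^ (-σ) * D.toReal) :=
      mul_le_mul_of_nonneg_left h1 (Real.rpow_nonneg (norm_nonneg w) σ)
    refine h2.trans (le_trans (le_of_eq ?_) (le_max_left _ _))
    have hrw : r ^ (-σ) = ‖w‖ ^ (-σ) * (2:ℝ) ^ σ := by
      rw [hr_def, div_eq_mul_inv, Real.mul_rpow (norm_nonneg w) (by norm_num),
        Real.inv_rpow (by norm_num), ← Real.rpow_neg (by norm_num : (0:ℝ) ≤ 2), neg_neg]
    rw [hrw, show ‖w‖ ^ σ * (‖w‖ ^ (-σ) * (2:ℝ) ^ σ * D.toReal) =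
      (‖w‖ ^ σ * ‖w‖ ^ (-σ)) * ((2:ℝ) ^ σ * D.toReal) by ring, ← Real.rpow_add hw0]
    norm_num
  · -- small ‖w‖
    have hsm : ∫⁻ x, ENNReal.ofReal (f x) ≤ KA + KT := by
      set g : EuclideanSpace ℝ (Fin n) → ℝ := fun y =>
        ‖y‖ ^ (-α₁) * (1 + ‖y‖ ^ 2) ^ (-(a+b)) with hg_def
      have hg0 : ∀ y, 0 ≤ g y := fun y =>
        mul_nonneg (Real.rpow_nonneg (norm_nonneg _) _) (Real.rpow_nonneg (by positivity) _)
      have step1 : ∫⁻ x, ENNReal.ofReal (f x) ≤ ∫⁻ x, ENNReal.ofReal (g (x - w)) := by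
        apply lintegral_mono
        intro x
        apply ENNReal.ofReal_le_ofReal
        rw [hfx, hg_def]
        apply mul_le_mul_of_nonneg_left _ (Real.rpow_nonneg (norm_nonneg _) _)
        apply Real.rpow_le_rpow_of_nonpos (by positivity)
          (by have := sq_nonneg ‖x‖; linarith) (by linarith : -(a+b) ≤ 0)
      have step2 : ∫⁻ x, ENNReal.ofReal (g (x - w)) = ∫⁻ y, ENNReal.ofReal (g y) :=
        lintegral_sub_right_eq_self (fun y => ENNReal.ofReal (g y)) w
      have hball : ∫⁻ y in ball (0 : EuclideanSpace ℝ (Fin n)) 1, ENNReal.ofReal (g y) ≤ KA := by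
        calc ∫⁻ y in ball (0 : EuclideanSpace ℝ (Fin n)) 1, ENNReal.ofReal (g y)
            ≤ ∫⁻ y in ball (0 : EuclideanSpace ℝ (Fin n)) 1, ENNReal.ofReal (‖y‖ ^ (-α₁)) := by
              apply setLIntegral_mono' measurableSet_ball
              intro y _
              apply ENNReal.ofReal_le_ofReal
              rw [hg_def]
              apply mul_le_of_le_one_right (Real.rpow_nonneg (norm_nonneg _) _)
              exact Real.rpow_le_one_of_one_le_of_nonpos
                (by have := sq_nonneg ‖y‖; linarith) (by linarith)
          _ ≤ ENNReal.ofReal ((1:ℝ) ^ ((n:ℝ) - α₁)) * KA := hKA 1 one_pos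
          _ = KA := by rw [Real.one_rpow, ENNReal.ofReal_one, one_mul]
      have hcompl : ∫⁻ y in (ball (0 : EuclideanSpace ℝ (Fin n)) 1)ᶜ,
          ENNReal.ofReal (g y) ≤ KT := by
        calc ∫⁻ y in (ball (0 : EuclideanSpace ℝ (Fin n)) 1)ᶜ, ENNReal.ofReal (g y)
            ≤ ∫⁻ y in (ball (0 : EuclideanSpace ℝ (Fin n)) 1)ᶜ,
              ENNReal.ofReal (‖y‖ ^ (-(γ₁+γ₂))) := by
              apply setLIntegral_mono' measurableSet_ball.compl
              intro y hy
              rw [mem_compl_iff, mem_ball_zero_iff, not_lt] at hy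
              have hy0 : (0:ℝ) < ‖y‖ := lt_of_lt_of_le one_pos hy
              apply ENNReal.ofReal_le_ofReal
              have hgb : g y ≤ ‖y‖ ^ (-(α₁ + 2*a)) * ‖y‖ ^ (-(2*b)) := by
                rw [hg_def]
                have hsq : (1:ℝ) ≤ ‖y‖ ^ 2 := by
                  have : (1:ℝ) = 1 ^ 2 := by norm_num
                  rw [this]; gcongr
                exact ptw_bound hy0 hy0 hα₁0.le (by linarith) (by linarith) ha0 hb0
              refine hgb.trans (le_of_eq ?_)
              rw [← Real.rpow_add hy0]
              congr 1
              rw [hγ₁_def, hγ₂_def]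
              ring
          _ ≤ ENNReal.ofReal ((1:ℝ) ^ ((n:ℝ) - (γ₁+γ₂))) * KT := hKT 1 one_pos
          _ = KT := by rw [Real.one_rpow, ENNReal.ofReal_one, one_mul]
      calc ∫⁻ x, ENNReal.ofReal (f x) ≤ ∫⁻ y, ENNReal.ofReal (g y) := step1.trans step2.le
        _ = (∫⁻ y in ball (0 : EuclideanSpace ℝ (Fin n)) 1, ENNReal.ofReal (g y)) +
            ∫⁻ y in (ball (0 : EuclideanSpace ℝ (Fin n)) 1)ᶜ, ENNReal.ofReal (g y) :=
            (lintegral_add_compl _ measurableSet_ball).symm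
        _ ≤ KA + KT := add_le_add hball hcompl
    rw [hint]
    have h1 : (∫⁻ x, ENNReal.ofReal (f x)).toReal ≤ (KA + KT).toReal :=
      ENNReal.toReal_mono (ENNReal.add_ne_top.2 ⟨hKAtop, hKTtop⟩) hsm
    have h2 : ‖w‖ ^ σ ≤ 1 := Real.rpow_le_one (norm_nonneg w) hw.le hσ0.le
    calc ‖w‖ ^ σ * (∫⁻ x, ENNReal.ofReal (f x)).toReal
        ≤ 1 * (KA + KT).toReal :=
          mul_le_mul h2 h1 ENNReal.toReal_nonneg zero_le_one
      _ = (KA + KT).toReal := one_mul _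
      _ ≤ max ((2:ℝ) ^ σ * D.toReal) ((KA + KT).toReal) := le_max_right _ _
end
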